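/- Let X₁, X₂ be Banach spaces and suppose T : X₁ × X₂ → Y is a bilinear operator that is multiple (3; 3, 2)-summing with constant C. Then T is multiple ((5,3); 5, 2)-summing with the same constant: for all finite families, (∑_i (∑_j ‖T(x¹_i,x²_j)‖^3)^{5/3})^{1/5} ≤ C ‖(x¹_i)‖_{w,5} ‖(x²_j)‖_{w,2}. -/

import Mathlib

open scoped BigOperators

/-- The weak ℓ^p norm of a finite family in a normed space:
`sup_{φ ∈ B_{X'}} (∑ j |φ(x_j)|^p)^(1/p)`. -/
noncomputable def weakNorm {X : Type*} [NormedAddCommGroup X] [NormedSpace ℝ X]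
    {n : ℕ} (x : Fin n → X) (p : ℝ) : ℝ :=
  ⨆ φ : {φ : X →L[ℝ] ℝ // ‖φ‖ ≤ 1}, (∑ j, |φ.1 (x j)| ^ p) ^ (1 / p)

lemma weakNorm_nonneg {X : Type*} [NormedAddCommGroup X] [NormedSpace ℝ X]
    {n : ℕ} (x : Fin n → X) (p : ℝ) : 0 ≤ weakNorm x p :=
  Real.iSup_nonneg fun φ => Real.rpow_nonneg
    (Finset.sum_nonneg fun j _ => Real.rpow_nonneg (abs_nonneg _) _) _

lemma weakNorm_bdd {X : Type*} [NormedAddCommGroup X] [NormedSpace ℝ X]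
    {n : ℕ} (x : Fin n → X) (p : ℝ) (hp : 0 ≤ p) :
    BddAbove (Set.range fun φ : {φ : X →L[ℝ] ℝ // ‖φ‖ ≤ 1} =>
      (∑ j, |φ.1 (x j)| ^ p) ^ (1 / p)) := by
  refine ⟨(∑ j, ‖x j‖ ^ p) ^ (1 / p), ?_⟩
  rintro _ ⟨φ, rfl⟩
  apply Real.rpow_le_rpow
  · exact Finset.sum_nonneg fun j _ => Real.rpow_nonneg (abs_nonneg _) _
  · refine Finset.sum_le_sum fun j _ => Real.rpow_le_rpow (abs_nonneg _) ?_ hp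
    calc |φ.1 (x j)| = ‖φ.1 (x j)‖ := rfl
      _ ≤ ‖φ.1‖ * ‖x j‖ := φ.1.le_opNorm _
      _ ≤ 1 * ‖x j‖ := by
          exact mul_le_mul_of_nonneg_right φ.2 (norm_nonneg _)
      _ = ‖x j‖ := one_mul _
  · positivity

lemma le_weakNorm {X : Type*} [NormedAddCommGroup X] [NormedSpace ℝ X]
    {n : ℕ} (x : Fin n → X) (p : ℝ) (hp : 0 ≤ p) (φ : {φ : X →L[ℝ] ℝ // ‖φ‖ ≤ 1}) :
    (∑ j, |φ.1 (x j)| ^ p) ^ (1 / p) ≤ weakNorm x p :=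
  le_ciSup (weakNorm_bdd x p hp) φ

/-- **Numerical instance of the anisotropic inclusion theorem:**
`Π²_{(3;3,2)} ⊂ Π²_{((5,3);5,2)}` with the same constant. -/
theorem bilinear_inclusion_3_32_to_53_52
    {X₁ X₂ Y : Type*} [NormedAddCommGroup X₁] [NormedSpace ℝ X₁] [CompleteSpace X₁]
    [NormedAddCommGroup X₂] [NormedSpace ℝ X₂] [CompleteSpace X₂]
    [NormedAddCommGroup Y] [NormedSpace ℝ Y] [CompleteSpace Y]
    (T : X₁ →L[ℝ] X₂ →L[ℝ] Y) (C : ℝ) (hC : 0 ≤ C)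
    (hT : ∀ (n₁ n₂ : ℕ) (x1 : Fin n₁ → X₁) (x2 : Fin n₂ → X₂),
      (∑ i, ∑ j, ‖T (x1 i) (x2 j)‖ ^ (3 : ℝ)) ^ ((1 : ℝ) / 3) ≤
        C * weakNorm x1 3 * weakNorm x2 2) :
    ∀ (n₁ n₂ : ℕ) (x1 : Fin n₁ → X₁) (x2 : Fin n₂ → X₂),
      (∑ i, (∑ j, ‖T (x1 i) (x2 j)‖ ^ (3 : ℝ)) ^ ((5 : ℝ) / 3)) ^ ((1 : ℝ) / 5) ≤
        C * weakNorm x1 5 * weakNorm x2 2 := by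
  intro n₁ n₂ x1 x2
  have hRHS : 0 ≤ C * weakNorm x1 5 * weakNorm x2 2 :=
    mul_nonneg (mul_nonneg hC (weakNorm_nonneg _ _)) (weakNorm_nonneg _ _)
  set B : Fin n₁ → ℝ := fun i => ∑ j, ‖T (x1 i) (x2 j)‖ ^ (3 : ℝ) with hBdef
  have hB : ∀ i, 0 ≤ B i := fun i =>
    Finset.sum_nonneg fun j _ => Real.rpow_nonneg (norm_nonneg _) _
  set S : ℝ := ∑ i, B i ^ ((5 : ℝ) / 3) with hSdef
  have hS0 : 0 ≤ S := Finset.sum_nonneg fun i _ => Real.rpow_nonneg (hB i) _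
  rcases eq_or_lt_of_le hS0 with hS | hS
  · rw [← hS, Real.zero_rpow (by norm_num)]
    exact hRHS
  -- the scaled family
  set lam : Fin n₁ → ℝ := fun i => B i ^ ((2 : ℝ) / 9) with hlamdef
  have hlam : ∀ i, 0 ≤ lam i := fun i => Real.rpow_nonneg (hB i) _
  set y1 : Fin n₁ → X₁ := fun i => lam i • x1 i with hy1def
  -- row sums of the scaled family
  have hrow : ∀ i, ∑ j, ‖T (y1 i) (x2 j)‖ ^ (3 : ℝ) = B i ^ ((5 : ℝ) / 3) := by
    intro i
    have : ∀ j, ‖T (y1 i) (x2 j)‖ ^ (3 : ℝ)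
        = lam i ^ (3 : ℝ) * ‖T (x1 i) (x2 j)‖ ^ (3 : ℝ) := by
      intro j
      have : T (y1 i) (x2 j) = lam i • T (x1 i) (x2 j) := by
        simp [hy1def]
      rw [this, norm_smul, Real.norm_eq_abs, abs_of_nonneg (hlam i),
        Real.mul_rpow (hlam i) (norm_nonneg _)]
    rw [Finset.sum_congr rfl fun j _ => this j, ← Finset.mul_sum]
    show lam i ^ (3 : ℝ) * B i = B i ^ ((5 : ℝ) / 3)
    have h1 : lam i ^ (3 : ℝ) = B i ^ ((2 : ℝ) / 3) := by
      show (B i ^ ((2:ℝ)/9)) ^ (3:ℝ) = B i ^ ((2:ℝ)/3)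
      rw [← Real.rpow_mul (hB i)]
      norm_num
    rw [h1]
    nth_rewrite 2 [← Real.rpow_one (B i)]
    rw [← Real.rpow_add' (hB i) (by norm_num)]
    norm_num
  -- weak-3 norm of the scaled family
  have hw3 : weakNorm y1 3 ≤ S ^ ((2 : ℝ) / 15) * weakNorm x1 5 := by
    apply Real.iSup_le _ (mul_nonneg (Real.rpow_nonneg hS0 _) (weakNorm_nonneg _ _))
    intro φ
    have habs : ∀ i, |φ.1 (y1 i)| = lam i * |φ.1 (x1 i)| := by
      intro i
      rw [hy1def]
      simp [abs_mul, abs_of_nonneg (hlam i)]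
    have hterm : ∀ i, |φ.1 (y1 i)| ^ (3 : ℝ)
        = lam i ^ (3 : ℝ) * |φ.1 (x1 i)| ^ (3 : ℝ) := by
      intro i
      rw [habs i, Real.mul_rpow (hlam i) (abs_nonneg _)]
    have hconj : Real.HolderConjugate ((5 : ℝ) / 2) ((5 : ℝ) / 3) :=
      ⟨by norm_num, by norm_num, by norm_num⟩
    have hHolder := Real.inner_le_Lp_mul_Lq_of_nonneg (f := fun i => lam i ^ (3 : ℝ))
      (g := fun i => |φ.1 (x1 i)| ^ (3 : ℝ)) Finset.univ hconj
      (fun i _ => Real.rpow_nonneg (hlam i) _)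
      (fun i _ => Real.rpow_nonneg (abs_nonneg _) _)
    have hf : ∀ i, (lam i ^ (3 : ℝ)) ^ ((5 : ℝ) / 2) = B i ^ ((5 : ℝ) / 3) := by
      intro i
      show ((B i ^ ((2:ℝ)/9)) ^ (3:ℝ)) ^ ((5:ℝ)/2) = B i ^ ((5:ℝ)/3)
      rw [← Real.rpow_mul (hB i), ← Real.rpow_mul (hB i)]
      norm_num
    have hg : ∀ i, (|φ.1 (x1 i)| ^ (3 : ℝ)) ^ ((5 : ℝ) / 3) = |φ.1 (x1 i)| ^ (5 : ℝ) := by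
      intro i
      rw [← Real.rpow_mul (abs_nonneg _)]
      norm_num
    simp only [hf, hg] at hHolder
    have hsum : ∑ i, |φ.1 (y1 i)| ^ (3 : ℝ)
        ≤ S ^ ((1:ℝ) / ((5:ℝ)/2)) * (∑ i, |φ.1 (x1 i)| ^ (5 : ℝ)) ^ ((1:ℝ) / ((5:ℝ)/3)) := by
      rw [Finset.sum_congr rfl fun i _ => hterm i]
      exact hHolder
    set W : ℝ := ∑ i, |φ.1 (x1 i)| ^ (5 : ℝ) with hWdef
    have hW0 : 0 ≤ W := Finset.sum_nonneg fun i _ => Real.rpow_nonneg (abs_nonneg _) _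
    calc (∑ i, |φ.1 (y1 i)| ^ (3 : ℝ)) ^ ((1:ℝ)/3)
        ≤ (S ^ ((1:ℝ) / ((5:ℝ)/2)) * W ^ ((1:ℝ) / ((5:ℝ)/3))) ^ ((1:ℝ)/3) := by
          apply Real.rpow_le_rpow
            (Finset.sum_nonneg fun i _ => Real.rpow_nonneg (abs_nonneg _) _) hsum
          norm_num
      _ = S ^ ((2:ℝ)/15) * W ^ ((1:ℝ)/5) := by
          rw [Real.mul_rpow (Real.rpow_nonneg hS0 _) (Real.rpow_nonneg hW0 _),
            ← Real.rpow_mul hS0, ← Real.rpow_mul hW0]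
          norm_num
      _ ≤ S ^ ((2:ℝ)/15) * weakNorm x1 5 := by
          apply mul_le_mul_of_nonneg_left _ (Real.rpow_nonneg hS0 _)
          exact le_weakNorm x1 5 (by norm_num) φ
  -- apply the hypothesis to the scaled family
  have hmain := hT n₁ n₂ y1 x2
  rw [Finset.sum_congr rfl fun i _ => hrow i] at hmain
  -- hmain : S ^ (1/3) ≤ C * weakNorm y1 3 * weakNorm x2 2
  have hchain : S ^ ((1:ℝ)/3) ≤ S ^ ((2:ℝ)/15) * (C * weakNorm x1 5 * weakNorm x2 2) := by
    calc S ^ ((1:ℝ)/3) ≤ C * weakNorm y1 3 * weakNorm x2 2 := hmain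
      _ ≤ C * (S ^ ((2:ℝ)/15) * weakNorm x1 5) * weakNorm x2 2 := by
          apply mul_le_mul_of_nonneg_right _ (weakNorm_nonneg _ _)
          exact mul_le_mul_of_nonneg_left hw3 hC
      _ = S ^ ((2:ℝ)/15) * (C * weakNorm x1 5 * weakNorm x2 2) := by ring
  have hsplit : S ^ ((1:ℝ)/3) = S ^ ((2:ℝ)/15) * S ^ ((1:ℝ)/5) := by
    rw [← Real.rpow_add hS]
    norm_num
  rw [hsplit] at hchain
  have h215 : (0:ℝ) < S ^ ((2:ℝ)/15) := Real.rpow_pos_of_pos hS _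
  exact le_of_mul_le_mul_left hchain h215
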